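/- Mean fixed-budget upper bound: Fix s2 ≤ |I2| and s3 ≤ |I3|, and suppose it is not the case that I1 = ∅, s2 = |I2|, and s3 = 0. For any S2 ⊆ I2 with |I2\S2| = s2, any S3 ⊆ I3 with |S3| = s3, and any l ≤ x ≤ u, the mean of x over I1 ∪ S2 ∪ S3 is at most ( Σ_{i∈I1} u(i) + (sum of the (|I2| − s2) largest upper bounds in I2) + (sum of the s3 largest upper bounds in I3) ) / (|I1| + |I2| − s2 + s3); moreover this bound is tight. -/

import Mathlib

noncomputable def kthLargest (Y : Multiset ℝ) (i : ℕ) : ℝ :=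
  ((Y.sort (· ≤ ·)).reverse).getD (i - 1) 0

noncomputable def kthSmallest (Y : Multiset ℝ) (i : ℕ) : ℝ :=
  (Y.sort (· ≤ ·)).getD (i - 1) 0

/-- Mean of `x` over a finset (equal to `0` on the empty set, since `x/0 = 0` in `ℝ`). -/
noncomputable def meanF {ι : Type*} (S : Finset ι) (x : ι → ℝ) : ℝ :=
  (∑ i ∈ S, x i) / S.card

/-- Sum of the `k` largest values of `u` over `J`. -/
noncomputable def topSum {ι : Type*} (J : Finset ι) (u : ι → ℝ) (k : ℕ) : ℝ :=
  ∑ i ∈ Finset.range k, kthLargest (J.val.map u) (i + 1)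

/-- Sum of the `k` smallest values of `l` over `J`. -/
noncomputable def botSum {ι : Type*} (J : Finset ι) (l : ι → ℝ) (k : ℕ) : ℝ :=
  ∑ i ∈ Finset.range k, kthSmallest (J.val.map l) (i + 1)

private lemma sum_range_getD (L : List ℝ) (k : ℕ) (hk : k ≤ L.length) :
    ∑ i ∈ Finset.range k, L.getD i 0 = (L.take k).sum := by
  induction k with
  | zero => simp
  | succ m ih =>
    have hm : m < L.length := hk
    rw [Finset.sum_range_succ, ih (le_of_lt hm), List.sum_take_succ L m hm,
      List.getD_eq_getElem L 0 hm]

private lemma take_sum_le (a : ℝ) (L : List ℝ) (ha : ∀ b ∈ L, b ≤ a) (k : ℕ)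
    (hk : k ≤ L.length) : (L.take k).sum ≤ ((a :: L).take k).sum := by
  cases k with
  | zero => simp
  | succ m =>
    have hm : m < L.length := hk
    rw [List.take_succ_cons, List.sum_cons, List.sum_take_succ L m hm]
    have : L[m] ≤ a := ha _ (List.getElem_mem hm)
    linarith

private lemma sublist_sum_le (l₁ l₂ : List ℝ) (h : l₁.Sublist l₂)
    (hs : l₂.Pairwise (fun a b => b ≤ a)) :
    l₁.sum ≤ (l₂.take l₁.length).sum := by
  induction h with
  | slnil => simp
  | @cons l₁' l₂' a h ih =>
    rw [List.pairwise_cons] at hs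
    exact le_trans (ih hs.2) (take_sum_le a l₂' hs.1 _ h.length_le)
  | @cons_cons l₁' l₂' a h ih =>
    rw [List.pairwise_cons] at hs
    simp only [List.length_cons, List.take_succ_cons, List.sum_cons]
    linarith [ih hs.2]

private lemma sorted_rev_pairwise (M : Multiset ℝ) :
    ((M.sort (· ≤ ·)).reverse).Pairwise (fun a b => b ≤ a) := by
  rw [List.pairwise_reverse]
  exact Multiset.pairwise_sort M _

private lemma sum_le_top (M N : Multiset ℝ) (h : N ≤ M) :
    N.sum ≤ (((M.sort (· ≤ ·)).reverse).take N.card).sum := by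
  set L := (M.sort (· ≤ ·)).reverse with hL
  have hcoe : (↑L : Multiset ℝ) = M := by
    rw [hL, Multiset.coe_reverse, Multiset.sort_eq]
  have h' : (↑N.toList : Multiset ℝ) ≤ ↑L := by
    rw [Multiset.coe_toList, hcoe]; exact h
  rw [Multiset.coe_le] at h'
  obtain ⟨l', hperm, hsub⟩ := h'
  have hsum : N.sum = l'.sum := by
    rw [← Multiset.sum_toList]
    exact (List.Perm.sum_eq hperm).symm
  have hcard : N.card = l'.length := by
    rw [← Multiset.length_toList]
    exact (List.Perm.length_eq hperm).symm
  rw [hsum, hcard]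
  exact sublist_sum_le l' L hsub (sorted_rev_pairwise M)

private lemma exists_le_map {α β : Type*} [DecidableEq α] [DecidableEq β] (f : α → β)
    (N : Multiset β) : ∀ s : Multiset α, N ≤ s.map f → ∃ t ≤ s, t.map f = N := by
  induction N using Multiset.induction_on with
  | empty => exact fun s _ => ⟨0, Multiset.zero_le s, rfl⟩
  | cons b N ih =>
    intro s hle
    have hb : b ∈ s.map f := Multiset.mem_of_le hle (Multiset.mem_cons_self b N)
    obtain ⟨a, ha, hfa⟩ := Multiset.mem_map.mp hb
    have hN : N ≤ (s.erase a).map f := by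
      rw [Multiset.map_erase_of_mem f s ha, hfa]
      have := Multiset.erase_le_erase b hle
      rwa [Multiset.erase_cons_head] at this
    obtain ⟨t, ht, htm⟩ := ih (s.erase a) hN
    refine ⟨a ::ₘ t, ?_, ?_⟩
    · calc a ::ₘ t ≤ a ::ₘ s.erase a := Multiset.cons_le_cons a ht
        _ = s := Multiset.cons_erase ha
    · rw [Multiset.map_cons, htm, hfa]

private lemma topSum_eq {ι : Type*} (J : Finset ι) (u : ι → ℝ) (k : ℕ) (hk : k ≤ J.card) :
    topSum J u k = (((J.val.map u).sort (· ≤ ·)).reverse.take k).sum := by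
  have hlen : (((J.val.map u).sort (· ≤ ·)).reverse).length = J.card := by
    rw [List.length_reverse, Multiset.length_sort, Multiset.card_map]
    rfl
  rw [topSum, ← sum_range_getD _ k (by rw [hlen]; exact hk)]
  apply Finset.sum_congr rfl
  intro i _
  simp [kthLargest]

private lemma sum_le_topSum {ι : Type*} (J S : Finset ι) (u : ι → ℝ) (hS : S ⊆ J) :
    ∑ i ∈ S, u i ≤ topSum J u S.card := by
  have hmap : (S.val.map u) ≤ J.val.map u :=
    Multiset.map_le_map (Finset.val_le_iff.mpr hS)
  have := sum_le_top (J.val.map u) (S.val.map u) hmap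
  rw [Multiset.card_map] at this
  rw [topSum_eq J u S.card (Finset.card_le_card hS)]
  calc ∑ i ∈ S, u i = (S.val.map u).sum := rfl
    _ ≤ _ := this

private lemma exists_subset_topSum {ι : Type*} [DecidableEq ι] (J : Finset ι) (u : ι → ℝ)
    (k : ℕ) (hk : k ≤ J.card) :
    ∃ S ⊆ J, S.card = k ∧ ∑ i ∈ S, u i = topSum J u k := by
  classical
  set M := J.val.map u with hM
  set L := (M.sort (· ≤ ·)).reverse with hLdef
  have hcoe : (↑L : Multiset ℝ) = M := by
    rw [hLdef, Multiset.coe_reverse, Multiset.sort_eq]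
  have hlen : L.length = J.card := by
    rw [hLdef, List.length_reverse, Multiset.length_sort, hM, Multiset.card_map]; rfl
  have hTle : (↑(L.take k) : Multiset ℝ) ≤ M := by
    rw [← hcoe]
    exact Multiset.coe_le.mpr (List.take_sublist k L).subperm
  obtain ⟨t, ht, htm⟩ := exists_le_map u _ J.val hTle
  have hnodup : t.Nodup := Multiset.nodup_of_le ht J.nodup
  refine ⟨⟨t, hnodup⟩, ?_, ?_, ?_⟩
  · exact Finset.val_le_iff.mp ht
  · show Multiset.card t = k
    have := congrArg Multiset.card htm
    rw [Multiset.card_map, Multiset.coe_card, List.length_take, hlen] at this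
    omega
  · rw [topSum_eq J u k hk]
    calc ∑ i ∈ (⟨t, hnodup⟩ : Finset ι), u i = (t.map u).sum := rfl
      _ = (L.take k).sum := by rw [htm, Multiset.sum_coe]

/-- Mean fixed-budget upper bound, with tightness. -/
theorem stmt8 {ι : Type*} [DecidableEq ι] (I1 I2 I3 : Finset ι)
    (h12 : Disjoint I1 I2) (h13 : Disjoint I1 I3) (h23 : Disjoint I2 I3)
    (l u : ι → ℝ) (hlu : ∀ i ∈ I1 ∪ I2 ∪ I3, l i ≤ u i)
    (s2 s3 : ℕ) (hs2 : s2 ≤ I2.card) (hs3 : s3 ≤ I3.card)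
    (hne : ¬ (I1 = ∅ ∧ s2 = I2.card ∧ s3 = 0)) :
    (∀ S2 ⊆ I2, ∀ S3 ⊆ I3, (I2 \ S2).card = s2 → S3.card = s3 →
      ∀ x : ι → ℝ, (∀ i ∈ I1 ∪ I2 ∪ I3, l i ≤ x i ∧ x i ≤ u i) →
        meanF (I1 ∪ S2 ∪ S3) x ≤
          ((∑ i ∈ I1, u i) + topSum I2 u (I2.card - s2) + topSum I3 u s3) /
            ((I1.card + I2.card - s2 + s3 : ℕ) : ℝ)) ∧
    (∃ S2 ⊆ I2, ∃ S3 ⊆ I3, (I2 \ S2).card = s2 ∧ S3.card = s3 ∧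
      ∃ x : ι → ℝ, (∀ i ∈ I1 ∪ I2 ∪ I3, l i ≤ x i ∧ x i ≤ u i) ∧
        meanF (I1 ∪ S2 ∪ S3) x =
          ((∑ i ∈ I1, u i) + topSum I2 u (I2.card - s2) + topSum I3 u s3) /
            ((I1.card + I2.card - s2 + s3 : ℕ) : ℝ)) := by
  have hn : (0 : ℕ) < I1.card + I2.card - s2 + s3 := by
    rcases Nat.eq_zero_or_pos (I1.card + I2.card - s2 + s3) with h0 | h
    · exfalso; apply hne
      refine ⟨Finset.card_eq_zero.mp (by omega), by omega, by omega⟩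
    · exact h
  -- card of union given the cards
  have hcard : ∀ S2 ⊆ I2, ∀ S3 ⊆ I3, (I2 \ S2).card = s2 → S3.card = s3 →
      (I1 ∪ S2 ∪ S3).card = I1.card + I2.card - s2 + s3 := by
    intro S2 hS2 S3 hS3 hc2 hc3
    have hc2' : S2.card = I2.card - s2 := by
      have := Finset.card_sdiff_of_subset hS2
      have := Finset.card_le_card hS2
      omega
    have d1 : Disjoint I1 S2 := h12.mono_right (Finset.le_iff_subset.mpr hS2)
    have d2 : Disjoint (I1 ∪ S2) S3 := by
      apply Finset.disjoint_union_left.mpr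
      exact ⟨h13.mono_right (Finset.le_iff_subset.mpr hS3),
        h23.mono (Finset.le_iff_subset.mpr hS2) (Finset.le_iff_subset.mpr hS3)⟩
    rw [Finset.card_union_of_disjoint d2, Finset.card_union_of_disjoint d1, hc2', hc3]
    omega
  have hsplit : ∀ S2 ⊆ I2, ∀ S3 ⊆ I3, ∀ x : ι → ℝ,
      ∑ i ∈ I1 ∪ S2 ∪ S3, x i = (∑ i ∈ I1, x i) + (∑ i ∈ S2, x i) + (∑ i ∈ S3, x i) := by
    intro S2 hS2 S3 hS3 x
    have d1 : Disjoint I1 S2 := h12.mono_right (Finset.le_iff_subset.mpr hS2)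
    have d2 : Disjoint (I1 ∪ S2) S3 := by
      apply Finset.disjoint_union_left.mpr
      exact ⟨h13.mono_right (Finset.le_iff_subset.mpr hS3),
        h23.mono (Finset.le_iff_subset.mpr hS2) (Finset.le_iff_subset.mpr hS3)⟩
    rw [Finset.sum_union d2, Finset.sum_union d1]
  constructor
  · intro S2 hS2 S3 hS3 hc2 hc3 x hx
    have hc2' : S2.card = I2.card - s2 := by
      have := Finset.card_sdiff_of_subset hS2
      have := Finset.card_le_card hS2
      omega
    rw [meanF, hcard S2 hS2 S3 hS3 hc2 hc3]
    have hnR : (0 : ℝ) < ((I1.card + I2.card - s2 + s3 : ℕ) : ℝ) := by exact_mod_cast hn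
    rw [div_le_div_iff₀ hnR hnR]
    apply mul_le_mul_of_nonneg_right ?_ (le_of_lt hnR)
    rw [hsplit S2 hS2 S3 hS3 x]
    have h1 : ∑ i ∈ I1, x i ≤ ∑ i ∈ I1, u i := by
      apply Finset.sum_le_sum
      intro i hi
      exact (hx i (by simp [hi])).2
    have h2 : ∑ i ∈ S2, x i ≤ topSum I2 u (I2.card - s2) := by
      calc ∑ i ∈ S2, x i ≤ ∑ i ∈ S2, u i := by
            apply Finset.sum_le_sum
            intro i hi
            exact (hx i (by simp [hS2 hi])).2
        _ ≤ topSum I2 u S2.card := sum_le_topSum I2 S2 u hS2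
        _ = topSum I2 u (I2.card - s2) := by rw [hc2']
    have h3 : ∑ i ∈ S3, x i ≤ topSum I3 u s3 := by
      calc ∑ i ∈ S3, x i ≤ ∑ i ∈ S3, u i := by
            apply Finset.sum_le_sum
            intro i hi
            exact (hx i (by simp [hS3 hi])).2
        _ ≤ topSum I3 u S3.card := sum_le_topSum I3 S3 u hS3
        _ = topSum I3 u s3 := by rw [hc3]
    linarith
  · obtain ⟨S2, hS2, hc2', hsum2⟩ := exists_subset_topSum I2 u (I2.card - s2) (Nat.sub_le _ _)
    obtain ⟨S3, hS3, hc3, hsum3⟩ := exists_subset_topSum I3 u s3 hs3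
    have hc2 : (I2 \ S2).card = s2 := by
      have := Finset.card_sdiff_of_subset hS2
      omega
    refine ⟨S2, hS2, S3, hS3, hc2, hc3, u, fun i hi => ⟨hlu i hi, le_refl _⟩, ?_⟩
    rw [meanF, hcard S2 hS2 S3 hS3 hc2 hc3, hsplit S2 hS2 S3 hS3 u, hsum2, hsum3]
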